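/- Every string in an obstruction language K_{x,a,b} is not uniquely decodable from its bigrams; i.e., L_OBST ⊆ Σ* \ L_UNIQ. -/

import Mathlib

/-- The multiset of bigrams (length-2 contiguous substrings) of a list. -/
def bigrams {β : Type*} (l : List β) : Multiset (β × β) :=
  (l.zip l.tail : List (β × β))

/-- The delimited form `$w$` of a string `w` over `α`, with `none` as the delimiter. -/
def delim {α : Type*} (w : List α) : List (Option α) :=
  none :: (w.map some ++ [none])

/-- The bigram encoding of a string: the multiset of bigrams of its delimited form. -/
def Phi {α : Type*} (w : List α) : Multiset (Option α × Option α) :=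
  bigrams (delim w)

/-- A string is uniquely decodable if it is the only string with its bigram encoding. -/
def UD {α : Type*} (w : List α) : Prop :=
  ∀ w' : List α, Phi w' = Phi w → w' = w

/-- The obstruction language `I_{x,a,b} = Σ* a x (Σ\{a})* b Σ*`. -/
def Ilang {α : Type*} (x a b : α) : Language α :=
  {w | ∃ p m s : List α, w = p ++ a :: x :: (m ++ b :: s) ∧ a ∉ m}

/-- The obstruction language `J_{x,a,b} = Σ* a (Σ\{x})* b Σ*`. -/
def Jlang {α : Type*} (x a b : α) : Language α :=
  {w | ∃ p m s : List α, w = p ++ a :: (m ++ b :: s) ∧ x ∉ m}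

/-- The obstruction language `K_{x,a,b} = I_{x,a,b} ∩ J_{x,a,b}`. -/
def Klang {α : Type*} (x a b : α) : Language α :=
  {w | w ∈ Ilang x a b ∧ w ∈ Jlang x a b}

lemma bigrams_cons_cons {β : Type*} (a b : β) (l : List β) :
    bigrams (a :: b :: l) = (a, b) ::ₘ bigrams (b :: l) := by
  simp [bigrams]

lemma bigrams_cut {β : Type*} (u : List β) (c : β) (v : List β) :
    bigrams (u ++ c :: v) = bigrams (u ++ [c]) + bigrams (c :: v) := by
  induction u with
  | nil => simp [bigrams]
  | cons h u' ih =>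
    cases u' with
    | nil => simp [bigrams_cons_cons, bigrams]
    | cons h2 u'' =>
      simp only [List.cons_append, bigrams_cons_cons] at *
      rw [ih]
      simp [Multiset.cons_add]

lemma bigrams_swap4 {β : Type*} (c d : β) (A y B z C : List β) :
    bigrams (A ++ c :: y ++ d :: B ++ c :: z ++ d :: C)
      = bigrams (A ++ c :: z ++ d :: B ++ c :: y ++ d :: C) := by
  have key : ∀ y z : List β, bigrams (A ++ c :: y ++ d :: B ++ c :: z ++ d :: C)
      = bigrams (A ++ [c]) + (bigrams (c :: y ++ [d]) + (bigrams (d :: B ++ [c])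
          + (bigrams (c :: z ++ [d]) + bigrams (d :: C)))) := by
    intro y z
    rw [show A ++ c :: y ++ d :: B ++ c :: z ++ d :: C
        = A ++ c :: (y ++ d :: (B ++ c :: (z ++ d :: C))) by simp]
    rw [bigrams_cut A c (y ++ d :: (B ++ c :: (z ++ d :: C)))]
    rw [show c :: (y ++ d :: (B ++ c :: (z ++ d :: C)))
        = (c :: y) ++ d :: (B ++ c :: (z ++ d :: C)) by simp]
    rw [bigrams_cut (c :: y) d (B ++ c :: (z ++ d :: C))]
    rw [show d :: (B ++ c :: (z ++ d :: C)) = (d :: B) ++ c :: (z ++ d :: C) by simp]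
    rw [bigrams_cut (d :: B) c (z ++ d :: C)]
    rw [show c :: (z ++ d :: C) = (c :: z) ++ d :: C by simp]
    rw [bigrams_cut (c :: z) d C]
  rw [key y z, key z y]
  abel

lemma bigrams_swap3 {β : Type*} (c : β) (A y z C : List β) :
    bigrams (A ++ c :: y ++ c :: z ++ c :: C)
      = bigrams (A ++ c :: z ++ c :: y ++ c :: C) := by
  have key : ∀ y z : List β, bigrams (A ++ c :: y ++ c :: z ++ c :: C)
      = bigrams (A ++ [c]) + (bigrams (c :: y ++ [c])
          + (bigrams (c :: z ++ [c]) + bigrams (c :: C))) := by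
    intro y z
    rw [show A ++ c :: y ++ c :: z ++ c :: C
        = A ++ c :: (y ++ c :: (z ++ c :: C)) by simp]
    rw [bigrams_cut A c (y ++ c :: (z ++ c :: C))]
    rw [show c :: (y ++ c :: (z ++ c :: C)) = (c :: y) ++ c :: (z ++ c :: C) by simp]
    rw [bigrams_cut (c :: y) c (z ++ c :: C)]
    rw [show c :: (z ++ c :: C) = (c :: z) ++ c :: C by simp]
    rw [bigrams_cut (c :: z) c C]
  rw [key y z, key z y]
  abel

lemma phi_swap4 {α : Type*} (a b : α) (A m B n C : List α) :
    Phi (A ++ a :: m ++ b :: B ++ a :: n ++ b :: C)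
      = Phi (A ++ a :: n ++ b :: B ++ a :: m ++ b :: C) := by
  unfold Phi
  have e1 : delim (A ++ a :: m ++ b :: B ++ a :: n ++ b :: C)
      = (none :: A.map some) ++ (some a) :: m.map some ++ (some b) :: B.map some
          ++ (some a) :: n.map some ++ (some b) :: (C.map some ++ [none]) := by
    simp [delim]
  have e2 : delim (A ++ a :: n ++ b :: B ++ a :: m ++ b :: C)
      = (none :: A.map some) ++ (some a) :: n.map some ++ (some b) :: B.map some
          ++ (some a) :: m.map some ++ (some b) :: (C.map some ++ [none]) := by
    simp [delim]
  rw [e1, e2, bigrams_swap4]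

lemma phi_swap3 {α : Type*} (a : α) (A m n C : List α) :
    Phi (A ++ a :: m ++ a :: n ++ a :: C)
      = Phi (A ++ a :: n ++ a :: m ++ a :: C) := by
  unfold Phi
  have e1 : delim (A ++ a :: m ++ a :: n ++ a :: C)
      = (none :: A.map some) ++ (some a) :: m.map some ++ (some a) :: n.map some
          ++ (some a) :: (C.map some ++ [none]) := by
    simp [delim]
  have e2 : delim (A ++ a :: n ++ a :: m ++ a :: C)
      = (none :: A.map some) ++ (some a) :: n.map some ++ (some a) :: m.map some
          ++ (some a) :: (C.map some ++ [none]) := by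
    simp [delim]
  rw [e1, e2, bigrams_swap3]

lemma ne_core {α : Type*} (A : List α) (x a r : α) (L n M : List α)
    (hxn : x ∉ n) (hrx : r ≠ x) : A ++ a :: x :: L ≠ A ++ a :: (n ++ r :: M) := by
  intro h
  have h2 : a :: x :: L = a :: (n ++ r :: M) := List.append_cancel_left h
  have h3 : x :: L = n ++ r :: M := by simpa using h2
  cases n with
  | nil =>
    simp only [List.nil_append] at h3
    exact hrx (List.cons.injEq .. ▸ h3).1.symm
  | cons c n' =>
    have : x = c := by simpa using congrArg List.head? h3
    exact hxn (this ▸ (List.mem_cons_self : c ∈ c :: n'))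

/-- Key splitting lemma: if `a ∉ m` and `m ++ b :: s = q ++ a :: r`, the `a` is at or
after the `b`. -/
lemma split_no_mem {α : Type*} {a : α} : ∀ (m : List α), a ∉ m →
    ∀ (b : α) (s q r : List α), m ++ b :: s = q ++ a :: r →
      (q = m ∧ b = a ∧ s = r) ∨ ∃ q₃, q = m ++ b :: q₃ ∧ s = q₃ ++ a :: r := by
  intro m
  induction m with
  | nil =>
    intro _ b s q r h
    cases q with
    | nil =>
      left
      simp only [List.nil_append, List.cons.injEq] at h
      exact ⟨rfl, h.1, h.2⟩
    | cons c q' =>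
      right
      simp only [List.nil_append, List.cons_append, List.cons.injEq] at h
      exact ⟨q', by simp [h.1], h.2⟩
  | cons c m' ih =>
    intro ham b s q r h
    cases q with
    | nil =>
      exfalso
      simp only [List.nil_append, List.cons_append, List.cons.injEq] at h
      exact ham (h.1 ▸ (List.mem_cons_self : a ∈ a :: _))
    | cons c' q' =>
      simp only [List.cons_append, List.cons.injEq] at h
      obtain ⟨rfl, h2⟩ := h
      rcases ih (fun hm => ham (List.mem_cons_of_mem _ hm)) b s q' r h2 with
        ⟨rfl, hba, hs⟩ | ⟨q₃, rfl, hs⟩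
      · exact Or.inl ⟨rfl, hba, hs⟩
      · exact Or.inr ⟨q₃, by simp, hs⟩

lemma not_UD_swap4_left {α : Type*} {x a b : α} (A m B n C : List α)
    (hxn : x ∉ n) (hbx : b ≠ x) :
    ¬ UD (A ++ a :: (x :: m) ++ b :: B ++ a :: n ++ b :: C) := by
  intro h
  have hphi := phi_swap4 a b A n B (x :: m) C
  have heq := h _ hphi
  refine ne_core A x a b (m ++ b :: B ++ a :: n ++ b :: C) n
    (B ++ a :: (x :: m) ++ b :: C) hxn hbx ?_
  calc A ++ a :: x :: (m ++ b :: B ++ a :: n ++ b :: C)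
      = A ++ a :: (x :: m) ++ b :: B ++ a :: n ++ b :: C := by simp
    _ = A ++ a :: n ++ b :: B ++ a :: (x :: m) ++ b :: C := heq.symm
    _ = A ++ a :: (n ++ b :: (B ++ a :: (x :: m) ++ b :: C)) := by simp

lemma not_UD_swap4_right {α : Type*} {x a b : α} (A m B n C : List α)
    (hxn : x ∉ n) (hbx : b ≠ x) :
    ¬ UD (A ++ a :: n ++ b :: B ++ a :: (x :: m) ++ b :: C) := by
  intro h
  have hphi := phi_swap4 a b A (x :: m) B n C
  have heq := h _ hphi
  refine ne_core A x a b (m ++ b :: B ++ a :: n ++ b :: C) n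
    (B ++ a :: (x :: m) ++ b :: C) hxn hbx ?_
  calc A ++ a :: x :: (m ++ b :: B ++ a :: n ++ b :: C)
      = A ++ a :: (x :: m) ++ b :: B ++ a :: n ++ b :: C := by simp
    _ = A ++ a :: n ++ b :: B ++ a :: (x :: m) ++ b :: C := heq
    _ = A ++ a :: (n ++ b :: (B ++ a :: (x :: m) ++ b :: C)) := by simp

lemma not_UD_swap3_left {α : Type*} {x a : α} (A m n C : List α)
    (hxn : x ∉ n) (hax : a ≠ x) :
    ¬ UD (A ++ a :: (x :: m) ++ a :: n ++ a :: C) := by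
  intro h
  have hphi := phi_swap3 a A n (x :: m) C
  have heq := h _ hphi
  refine ne_core A x a a (m ++ a :: n ++ a :: C) n
    ((x :: m) ++ a :: C) hxn hax ?_
  calc A ++ a :: x :: (m ++ a :: n ++ a :: C)
      = A ++ a :: (x :: m) ++ a :: n ++ a :: C := by simp
    _ = A ++ a :: n ++ a :: (x :: m) ++ a :: C := heq.symm
    _ = A ++ a :: (n ++ a :: ((x :: m) ++ a :: C)) := by simp

lemma not_UD_swap3_right {α : Type*} {x a : α} (A m n C : List α)
    (hxn : x ∉ n) (hax : a ≠ x) :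
    ¬ UD (A ++ a :: n ++ a :: (x :: m) ++ a :: C) := by
  intro h
  have hphi := phi_swap3 a A (x :: m) n C
  have heq := h _ hphi
  refine ne_core A x a a (m ++ a :: n ++ a :: C) n
    ((x :: m) ++ a :: C) hxn hax ?_
  calc A ++ a :: x :: (m ++ a :: n ++ a :: C)
      = A ++ a :: (x :: m) ++ a :: n ++ a :: C := by simp
    _ = A ++ a :: n ++ a :: (x :: m) ++ a :: C := heq
    _ = A ++ a :: (n ++ a :: ((x :: m) ++ a :: C)) := by simp

theorem obstruction_not_UD {α : Type*} [Fintype α] (x a b : α)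
    (ha : a ≠ x) (hb : b ≠ x) (w : List α) (hw : w ∈ Klang x a b) :
    ¬ UD w := by
  obtain ⟨⟨p, m, s, rfl, ham⟩, ⟨q, n, t, hJeq, hxn⟩⟩ := hw
  rcases List.append_eq_append_iff.mp hJeq with ⟨e, he, h2⟩ | ⟨e, he, h2⟩
  · -- q = p ++ e, a :: x :: (m ++ b :: s) = e ++ a :: (n ++ b :: t)
    cases e with
    | nil =>
      simp only [List.nil_append, List.cons.injEq] at h2
      have h3 : x :: (m ++ b :: s) = n ++ b :: t := h2.2
      cases n with
      | nil =>
        simp only [List.nil_append, List.cons.injEq] at h3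
        exact absurd h3.1.symm hb
      | cons c n' =>
        simp only [List.cons_append, List.cons.injEq] at h3
        exact absurd (h3.1 ▸ (List.mem_cons_self : c ∈ c :: n')) hxn
    | cons e0 e' =>
      simp only [List.cons_append, List.cons.injEq] at h2
      obtain ⟨rfl, h3⟩ := h2
      cases e' with
      | nil =>
        simp only [List.nil_append, List.cons.injEq] at h3
        exact absurd h3.1.symm ha
      | cons e1 e'' =>
        simp only [List.cons_append, List.cons.injEq] at h3
        obtain ⟨rfl, h4⟩ := h3
        rcases split_no_mem m ham b s e'' (n ++ b :: t) h4 with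
          ⟨hem, hba, hst⟩ | ⟨q₃, hq3, hst⟩
        · rw [hst, hba]
          rw [show p ++ a :: x :: (m ++ a :: (n ++ a :: t))
              = p ++ a :: (x :: m) ++ a :: n ++ a :: t by simp]
          exact not_UD_swap3_left p m n t hxn ha
        · rw [hst]
          rw [show p ++ a :: x :: (m ++ b :: (q₃ ++ a :: (n ++ b :: t)))
              = p ++ a :: (x :: m) ++ b :: q₃ ++ a :: n ++ b :: t by simp]
          exact not_UD_swap4_left p m q₃ n t hxn hb
  · -- p = q ++ e, a :: (n ++ b :: t) = e ++ a :: x :: (m ++ b :: s)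
    rw [hJeq]
    cases e with
    | nil =>
      simp only [List.nil_append, List.cons.injEq] at h2
      have h3 : n ++ b :: t = x :: (m ++ b :: s) := h2.2
      cases n with
      | nil =>
        simp only [List.nil_append, List.cons.injEq] at h3
        exact absurd h3.1 hb
      | cons c n' =>
        simp only [List.cons_append, List.cons.injEq] at h3
        exact absurd (h3.1.symm ▸ (List.mem_cons_self : c ∈ c :: n')) hxn
    | cons e0 e' =>
      simp only [List.cons_append, List.cons.injEq] at h2
      obtain ⟨rfl, h3⟩ := h2
      have h4 : n ++ b :: t = (e' ++ [a]) ++ x :: (m ++ b :: s) := by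
        rw [h3]; simp
      rcases split_no_mem n hxn b t (e' ++ [a]) (m ++ b :: s) h4 with
        ⟨_, hbx2, _⟩ | ⟨q₃, hq, rfl⟩
      · exact absurd hbx2 hb
      · rcases q₃.eq_nil_or_concat with rfl | ⟨q₄, a', rfl⟩
        · obtain ⟨hen, hab⟩ := List.append_inj' hq rfl
          have hab' : a = b := by simpa using hab
          rw [← hab']
          rw [show q ++ a :: (n ++ a :: ([] ++ x :: (m ++ a :: s)))
              = q ++ a :: n ++ a :: (x :: m) ++ a :: s by simp]
          exact not_UD_swap3_right q m n s hxn ha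
        · have hq' : e' ++ [a] = (n ++ b :: q₄) ++ [a'] := by rw [hq]; simp
          obtain ⟨hen, haa⟩ := List.append_inj' hq' rfl
          have haa' : a = a' := by simpa using haa
          rw [← haa']
          rw [show q ++ a :: (n ++ b :: (q₄.concat a ++ x :: (m ++ b :: s)))
              = q ++ a :: n ++ b :: q₄ ++ a :: (x :: m) ++ b :: s by simp]
          exact not_UD_swap4_right q m q₄ n s hxn hb
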